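/- arXiv:2508.14147 — 2 statements merged into one kernel-verified Lean document; each statement's English description precedes it below -/
import Mathlib

section
/- Let G be a temporal graph and k ≥ 1 an integer. If [ts,te] and [ts',te'] are windows with C_[ts,te] and C_[ts',te'] both nonempty and TTI(C_[ts,te]) = TTI(C_[ts',te']), then C_[ts,te] = C_[ts',te']. That is, a nonempty temporal k-core is uniquely determined by its tightest time interval. -/
variable {V : Type*} [Fintype V]

/-- A vertex set `S` is `k`-dense in `G` if every vertex of `S` has
at least `k` neighbors of `G` lying in `S`. -/
def KDense (G : SimpleGraph V) (k : ℕ) (S : Set V) : Prop :=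
  ∀ v ∈ S, k ≤ (S ∩ G.neighborSet v).ncard

/-- The `k`-core of `G`: the union of all `k`-dense vertex sets. -/
def kCore (G : SimpleGraph V) (k : ℕ) : Set V :=
  ⋃₀ {S | KDense G k S}

/-- A temporal graph on a vertex set `V`: a finite set of temporal edges
`(u, v, t)` with `u ≠ v` and integer timestamp `t`. -/
structure TemporalGraph (V : Type*) where
  E : Finset (V × V × ℤ)
  ne : ∀ e ∈ E, e.1 ≠ e.2.1

/-- The projected (snapshot) graph of `G` over the time window `[ts, te]`. -/
def TemporalGraph.proj (G : TemporalGraph V) (ts te : ℤ) : SimpleGraph V where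
  Adj u v := ∃ t, ts ≤ t ∧ t ≤ te ∧ ((u, v, t) ∈ G.E ∨ (v, u, t) ∈ G.E)
  symm := by
    constructor
    rintro u v ⟨t, h1, h2, h3⟩
    exact ⟨t, h1, h2, h3.symm⟩
  loopless := by
    constructor
    rintro u ⟨t, h1, h2, h3⟩
    rcases h3 with h | h <;> exact G.ne _ h rfl

/-- The temporal `k`-core of the window `[ts, te]`: all temporal edges with
timestamp in `[ts, te]` whose both endpoints lie in the `k`-core of the
projected graph `G_[ts,te]`. -/
def TemporalGraph.tCore (G : TemporalGraph V) (k : ℕ) (ts te : ℤ) :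
    Set (V × V × ℤ) :=
  {e | e ∈ G.E ∧ ts ≤ e.2.2 ∧ e.2.2 ≤ te ∧
    e.1 ∈ kCore (G.proj ts te) k ∧ e.2.1 ∈ kCore (G.proj ts te) k}

/-- `[a, b]` is the tightest time interval of the edge set `C`:
`a` and `b` are the minimum and maximum timestamps of the edges in `C`. -/
def IsTTI (C : Set (V × V × ℤ)) (a b : ℤ) : Prop :=
  IsLeast {t | ∃ e ∈ C, e.2.2 = t} a ∧ IsGreatest {t | ∃ e ∈ C, e.2.2 = t} b


lemma kDense_kCore (G : SimpleGraph V) (k : ℕ) : KDense G k (kCore G k) := by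
  intro v hv
  obtain ⟨S, hS, hvS⟩ := hv
  refine le_trans (hS v hvS) (Set.ncard_le_ncard ?_ (Set.toFinite _))
  exact Set.inter_subset_inter_left _ (Set.subset_sUnion_of_mem hS)

lemma kCore_mono {G G' : SimpleGraph V} (k : ℕ) (h : ∀ u v, G.Adj u v → G'.Adj u v) :
    kCore G k ⊆ kCore G' k := by
  intro v hv
  obtain ⟨S, hS, hvS⟩ := hv
  refine Set.subset_sUnion_of_mem (?_ : KDense G' k S) hvS
  intro w hw
  refine le_trans (hS w hw) (Set.ncard_le_ncard ?_ (Set.toFinite _))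
  exact Set.inter_subset_inter_right _ (fun u hu => h w u hu)

lemma tCore_eq_TTI (G : TemporalGraph V) (k : ℕ) {ts te a b : ℤ}
    (hT : IsTTI (G.tCore k ts te) a b) :
    G.tCore k ts te = G.tCore k a b := by
  obtain ⟨⟨⟨e₀, he₀, he₀a⟩, hlb⟩, ⟨⟨e₁, he₁, he₁b⟩, hub⟩⟩ := hT
  have hts_a : ts ≤ a := he₀a ▸ he₀.2.1
  have hb_te : b ≤ te := he₁b ▸ he₁.2.2.1
  -- the cores of the two projected graphs agree
  have hcore : kCore (G.proj ts te) k = kCore (G.proj a b) k := by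
    apply Set.Subset.antisymm
    · -- kCore (proj ts te) is KDense in proj a b
      have hdense : KDense (G.proj a b) k (kCore (G.proj ts te) k) := by
        intro v hv
        refine le_trans (kDense_kCore (G.proj ts te) k v hv)
          (Set.ncard_le_ncard ?_ (Set.toFinite _))
        rintro u ⟨huW, hadj⟩
        obtain ⟨t, ht1, ht2, ht3⟩ := hadj
        have hmem : ∀ (x y : V), (x, y, t) ∈ G.E → x ∈ kCore (G.proj ts te) k →
            y ∈ kCore (G.proj ts te) k → a ≤ t ∧ t ≤ b := by
          intro x y hE hx hy
          have hC : (x, y, t) ∈ G.tCore k ts te := ⟨hE, ht1, ht2, hx, hy⟩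
          exact ⟨hlb ⟨_, hC, rfl⟩, hub ⟨_, hC, rfl⟩⟩
        have hab : a ≤ t ∧ t ≤ b := by
          rcases ht3 with h | h
          · exact hmem v u h hv huW
          · exact hmem u v h huW hv
        exact ⟨huW, t, hab.1, hab.2, ht3⟩
      exact Set.subset_sUnion_of_mem hdense
    · exact kCore_mono k (fun u v ⟨t, h1, h2, h3⟩ =>
        ⟨t, le_trans hts_a h1, le_trans h2 hb_te, h3⟩)
  ext e
  constructor
  · rintro ⟨hE, _, _, hx, hy⟩
    have hC : e ∈ G.tCore k ts te := ⟨hE, ‹_›, ‹_›, hx, hy⟩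
    exact ⟨hE, hlb ⟨_, hC, rfl⟩, hub ⟨_, hC, rfl⟩, hcore ▸ hx, hcore ▸ hy⟩
  · rintro ⟨hE, ha, hb, hx, hy⟩
    exact ⟨hE, le_trans hts_a ha, le_trans hb hb_te, hcore ▸ hx, hcore ▸ hy⟩

theorem tCore_eq_of_TTI_eq (G : TemporalGraph V) (k : ℕ) (hk : 1 ≤ k)
    (ts te ts' te' a b : ℤ)
    (h1 : (G.tCore k ts te).Nonempty) (h2 : (G.tCore k ts' te').Nonempty)
    (hT1 : IsTTI (G.tCore k ts te) a b)
    (hT2 : IsTTI (G.tCore k ts' te') a b) :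
    G.tCore k ts te = G.tCore k ts' te' := by
  rw [tCore_eq_TTI G k hT1, tCore_eq_TTI G k hT2]
end

section
/- Let G be a temporal graph, k ≥ 1 an integer, and ts a start time. Suppose te < te' are end times such that C_[ts,te] and C_[ts,te'] are both nonempty with TTI(C_[ts,te]) = [ts,te] and TTI(C_[ts,te']) = [ts,te']. Then C_[ts,te] is a proper subset of C_[ts,te']; in particular, distinct tightest-time-interval end times for the same start time yield distinct temporal k-cores. -/
variable {V : Type*} [Fintype V]

lemma kCore_mono_s19 {G H : SimpleGraph V} (k : ℕ) (hGH : G ≤ H) :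
    kCore G k ⊆ kCore H k := by
  rintro v ⟨S, hS, hv⟩
  refine ⟨S, fun w hw => ?_, hv⟩
  refine le_trans (hS w hw) (Set.ncard_le_ncard ?_ (Set.toFinite _))
  exact Set.inter_subset_inter_right _ (fun x hx => hGH hx)

theorem tCore_ssubset_of_TTI_end_lt (G : TemporalGraph V) (k : ℕ)
    (hk : 1 ≤ k) (ts te te' : ℤ) (hlt : te < te')
    (h1 : (G.tCore k ts te).Nonempty) (h2 : (G.tCore k ts te').Nonempty)
    (hT1 : IsTTI (G.tCore k ts te) ts te)
    (hT2 : IsTTI (G.tCore k ts te') ts te') :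
    G.tCore k ts te ⊂ G.tCore k ts te' ∧
    G.tCore k ts te ≠ G.tCore k ts te' := by
  have hmono : G.proj ts te ≤ G.proj ts te' := by
    rintro u v ⟨t, h1, h2, h3⟩
    exact ⟨t, h1, h2.trans hlt.le, h3⟩
  have hsub : G.tCore k ts te ⊆ G.tCore k ts te' := by
    rintro e ⟨he, hts, hte, hu, hv⟩
    exact ⟨he, hts, hte.trans hlt.le, kCore_mono_s19 k hmono hu, kCore_mono_s19 k hmono hv⟩
  obtain ⟨e, heC, het⟩ := hT2.2.1
  have hne : e ∉ G.tCore k ts te := by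
    rintro ⟨-, -, h, -⟩
    omega
  have hss : G.tCore k ts te ⊂ G.tCore k ts te' :=
    ⟨hsub, fun h => hne (h heC)⟩
  exact ⟨hss, fun h => hne (h ▸ heC)⟩
end
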